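/- Let X be a compact metric space, Γ a nonempty set of Borel probability measures on X, ũ : X → ℝ continuous, and v : X → ℝⁿ continuous. For λ ∈ ℝⁿ define F_λ(γ) := ∫_X (ũ(x) + ⟨λ, v(x)⟩) dγ(x). Then for Lebesgue-almost every λ ∈ ℝⁿ: any two measures γ, γ' ∈ Γ that both attain sup_{γ'' ∈ Γ} F_λ(γ'') satisfy ∫_X v dγ = ∫_X v dγ'. Moreover, if in addition v is injective and γ = δ_x and γ' = δ_{x'} are Dirac maximizers, then x = x'. -/

import Mathlib

open MeasureTheory

/-- measure-theoretic finite-dimensional form of Theorem 1 — over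
a set `Γ` of Borel probability measures on a compact metric space, for
Lebesgue-almost every coefficient vector `λ` all maximizers of
`γ ↦ ∫ (ũ + ⟨λ, v⟩) dγ` share the same `v`-moment vector, and when `v` is
injective any two Dirac maximizers coincide. -/
theorem stmt9 {X : Type*} [MetricSpace X] [CompactSpace X]
    [MeasurableSpace X] [BorelSpace X] {n : ℕ}
    (Γ : Set (ProbabilityMeasure X)) (hΓ : Γ.Nonempty)
    (utilde : X → ℝ) (hutilde : Continuous utilde)
    (v : X → (Fin n → ℝ)) (hv : Continuous v)
    (F : (Fin n → ℝ) → ProbabilityMeasure X → ℝ)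
    (hF : ∀ lam γ, F lam γ
      = ∫ x, (utilde x + ∑ k, lam k * v x k) ∂(γ : Measure X)) :
    ∀ᵐ lam : (Fin n → ℝ) ∂volume,
      (∀ γ ∈ Γ, ∀ γ' ∈ Γ,
        F lam γ = sSup (F lam '' Γ) → F lam γ' = sSup (F lam '' Γ) →
        (∫ x, v x ∂(γ : Measure X)) = ∫ x, v x ∂(γ' : Measure X)) ∧
      (Function.Injective v → ∀ γ ∈ Γ, ∀ γ' ∈ Γ, ∀ x x' : X,
        (γ : Measure X) = Measure.dirac x → (γ' : Measure X) = Measure.dirac x' →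
        F lam γ = sSup (F lam '' Γ) → F lam γ' = sSup (F lam '' Γ) →
        x = x') := by
  classical
  -- integrability of continuous functions against probability measures
  have hint : ∀ (γ : ProbabilityMeasure X) (f : X → ℝ), Continuous f →
      Integrable f (γ : Measure X) := fun γ f hf =>
    hf.integrable_of_hasCompactSupport (HasCompactSupport.of_compactSpace f)
  have hvint : ∀ γ : ProbabilityMeasure X, Integrable v (γ : Measure X) := fun γ =>
    hv.integrable_of_hasCompactSupport (HasCompactSupport.of_compactSpace v)
  -- moment vector and constant part
  set m : ProbabilityMeasure X → (Fin n → ℝ) :=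
    fun γ k => ∫ x, v x k ∂(γ : Measure X) with hm
  set c : ProbabilityMeasure X → ℝ :=
    fun γ => ∫ x, utilde x ∂(γ : Measure X) with hc
  have hFaff : ∀ lam γ, F lam γ = c γ + ∑ k, lam k * m γ k := by
    intro lam γ
    rw [hF]
    rw [integral_add (hint γ _ hutilde)
      (integrable_finset_sum _ fun k _ =>
        (hint γ (fun x => v x k) ((continuous_apply k).comp hv)).const_mul _)]
    congr 1
    rw [integral_finset_sum _ fun k _ =>
      (hint γ (fun x => v x k) ((continuous_apply k).comp hv)).const_mul _]
    exact Finset.sum_congr rfl fun k _ => integral_const_mul _ _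
  -- bounds
  obtain ⟨Cv₀, hCv₀⟩ := isCompact_univ.exists_bound_of_continuousOn hv.continuousOn
  set Cv := max Cv₀ 0 with hCvdef
  have hCv : ∀ x : X, ‖v x‖ ≤ Cv := fun x => le_trans (hCv₀ x trivial) (le_max_left _ _)
  have hCvnn : (0:ℝ) ≤ Cv := le_max_right _ _
  obtain ⟨Cu₀, hCu₀⟩ := isCompact_univ.exists_bound_of_continuousOn hutilde.continuousOn
  set Cu := max Cu₀ 0 with hCudef
  have hCu : ∀ x : X, ‖utilde x‖ ≤ Cu := fun x => le_trans (hCu₀ x trivial) (le_max_left _ _)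
  have hmb : ∀ (γ : ProbabilityMeasure X) (k : Fin n), |m γ k| ≤ Cv := by
    intro γ k
    have : ‖∫ x, v x k ∂(γ : Measure X)‖ ≤ Cv * ((γ : Measure X) Set.univ).toReal :=
      norm_integral_le_of_norm_le_const (ae_of_all _ fun x =>
        le_trans (norm_le_pi_norm (v x) k) (hCv x))
    simpa [m] using this
  have hcb : ∀ γ : ProbabilityMeasure X, |c γ| ≤ Cu := by
    intro γ
    have : ‖∫ x, utilde x ∂(γ : Measure X)‖ ≤ Cu * ((γ : Measure X) Set.univ).toReal :=
      norm_integral_le_of_norm_le_const (ae_of_all _ fun x => hCu x)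
    simpa [c] using this
  -- sup function and bounded-above fact
  set g : (Fin n → ℝ) → ℝ := fun lam => sSup (F lam '' Γ) with hg
  have hbdd : ∀ lam : Fin n → ℝ, BddAbove (F lam '' Γ) := by
    intro lam
    refine ⟨Cu + ∑ k, |lam k| * Cv, ?_⟩
    rintro y ⟨γ, _, rfl⟩
    rw [hFaff]
    refine add_le_add ((le_abs_self _).trans (hcb γ)) (Finset.sum_le_sum fun k _ => ?_)
    calc lam k * m γ k ≤ |lam k * m γ k| := le_abs_self _
      _ = |lam k| * |m γ k| := abs_mul _ _
      _ ≤ |lam k| * Cv := by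
          exact mul_le_mul_of_nonneg_left (hmb γ k) (abs_nonneg _)
  have hFle : ∀ (lam : Fin n → ℝ) (γ : ProbabilityMeasure X), γ ∈ Γ → F lam γ ≤ g lam :=
    fun lam γ hγ => le_csSup (hbdd lam) ⟨γ, hγ, rfl⟩
  -- Lipschitz estimate
  set K : ℝ := (n : ℝ) * Cv with hK
  have hKnn : 0 ≤ K := mul_nonneg (Nat.cast_nonneg _) hCvnn
  have key : ∀ (l1 l2 : Fin n → ℝ) (γ : ProbabilityMeasure X),
      F l1 γ ≤ F l2 γ + K * dist l1 l2 := by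
    intro l1 l2 γ
    rw [hFaff, hFaff]
    have : ∑ k, l1 k * m γ k - ∑ k, l2 k * m γ k ≤ K * dist l1 l2 := by
      rw [← Finset.sum_sub_distrib]
      calc ∑ k, (l1 k * m γ k - l2 k * m γ k)
          ≤ ∑ _k : Fin n, Cv * dist l1 l2 := by
            refine Finset.sum_le_sum fun k _ => ?_
            rw [← sub_mul]
            calc (l1 k - l2 k) * m γ k ≤ |(l1 k - l2 k) * m γ k| := le_abs_self _
              _ = |l1 k - l2 k| * |m γ k| := abs_mul _ _
              _ ≤ dist l1 l2 * Cv := by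
                  refine mul_le_mul ?_ (hmb γ k) (abs_nonneg _) dist_nonneg
                  simpa [Real.dist_eq] using dist_le_pi_dist l1 l2 k
              _ = Cv * dist l1 l2 := mul_comm _ _
        _ = K * dist l1 l2 := by
            simp [hK, Finset.sum_const, mul_assoc]
    linarith
  have hglip : LipschitzWith K.toNNReal g := by
    refine LipschitzWith.of_dist_le_mul fun l1 l2 => ?_
    have h12 : g l1 ≤ g l2 + K * dist l1 l2 := by
      refine csSup_le (hΓ.image _) ?_
      rintro y ⟨γ, hγ, rfl⟩
      exact (key l1 l2 γ).trans (add_le_add_left (hFle l2 γ hγ) _)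
    have h21 : g l2 ≤ g l1 + K * dist l1 l2 := by
      refine csSup_le (hΓ.image _) ?_
      rintro y ⟨γ, hγ, rfl⟩
      have := key l2 l1 γ
      rw [dist_comm] at this
      exact this.trans (add_le_add_left (hFle l1 γ hγ) _)
    rw [Real.dist_eq, Real.coe_toNNReal _ hKnn]
    rw [abs_sub_le_iff]
    constructor <;> linarith
  -- Rademacher
  filter_upwards [hglip.ae_differentiableAt (μ := volume)] with lam hdiff
  -- envelope: every maximizer's moment equals the gradient
  have henv : ∀ γ ∈ Γ, F lam γ = sSup (F lam '' Γ) →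
      ∀ k, m γ k = fderiv ℝ g lam (Pi.single k 1) := by
    intro γ hγ hmax k
    set L : (Fin n → ℝ) →L[ℝ] ℝ :=
      ∑ j, m γ j • ContinuousLinearMap.proj j with hL
    have hLapp : ∀ μ' : Fin n → ℝ, L μ' = ∑ j, μ' j * m γ j := by
      intro μ'
      simp [hL, ContinuousLinearMap.sum_apply, mul_comm]
    have hDF : HasFDerivAt (fun μ' => F μ' γ) L lam := by
      have h1 : (fun μ' => F μ' γ) = fun μ' => c γ + L μ' := by
        funext μ'; rw [hFaff, hLapp]
      rw [h1]
      exact (L.hasFDerivAt).const_add (c γ)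
    have hmin : IsLocalMin (fun μ' => g μ' - F μ' γ) lam := by
      refine Filter.Eventually.of_forall fun μ' => ?_
      have h1 : F lam γ = g lam := hmax
      have h2 : F μ' γ ≤ g μ' := hFle μ' γ hγ
      simp only
      linarith
    have hzero := hmin.fderiv_eq_zero
    have hdiffF : DifferentiableAt ℝ (fun μ' => F μ' γ) lam := hDF.differentiableAt
    rw [fderiv_fun_sub hdiff hdiffF, hDF.fderiv, sub_eq_zero] at hzero
    have : m γ k = L (Pi.single k 1) := by
      rw [hLapp]
      simp [Pi.single_apply]
    rw [this, ← hzero]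
  -- moments determine the vector integral
  have hcomp : ∀ γ : ProbabilityMeasure X, (∫ x, v x ∂(γ : Measure X)) = m γ := by
    intro γ
    funext k
    have := (ContinuousLinearMap.proj (R := ℝ) (φ := fun _ : Fin n => ℝ) k).integral_comp_comm
      (hvint γ)
    simpa [m] using this.symm
  have main : ∀ γ ∈ Γ, ∀ γ' ∈ Γ,
      F lam γ = sSup (F lam '' Γ) → F lam γ' = sSup (F lam '' Γ) →
      (∫ x, v x ∂(γ : Measure X)) = ∫ x, v x ∂(γ' : Measure X) := by
    intro γ hγ γ' hγ' hmax hmax'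
    rw [hcomp, hcomp]
    funext k
    rw [henv γ hγ hmax k, henv γ' hγ' hmax' k]
  refine ⟨main, ?_⟩
  intro hinj γ hγ γ' hγ' x x' hx hx' hmax hmax'
  have := main γ hγ γ' hγ' hmax hmax'
  rw [hx, hx'] at this
  rw [integral_dirac, integral_dirac] at this
  exact hinj this
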